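/- Let c, d, k ∈ ℝ with c > 0 and d² − 4ck < 0, define f(u) = √(c u² + d u + k) and a(u) = arctan((2c/√(4ck − d²))(u + d/(2c))). Then the function F(u) = f'(u) sin(a(u)) + f(u) a'(u) cos(a(u)) has derivative zero, i.e., F is constant on ℝ. -/

import Mathlib

open Real Set

theorem stmt_9 (c d k : ℝ) (hc : 0 < c) (hΔ : d ^ 2 - 4 * c * k < 0)
    (f A F : ℝ → ℝ)
    (hf : ∀ u, f u = Real.sqrt (c * u ^ 2 + d * u + k))
    (hA : ∀ u, A u =
      Real.arctan ((2 * c / Real.sqrt (4 * c * k - d ^ 2)) * (u + d / (2 * c))))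
    (hF : ∀ u, F u =
      deriv f u * Real.sin (A u) + f u * deriv A u * Real.cos (A u)) :
    (∀ u : ℝ, deriv F u = 0) ∧ ∀ u v : ℝ, F u = F v := by
  have hΔ' : 0 < 4 * c * k - d ^ 2 := by linarith
  have hqpos : ∀ u : ℝ, 0 < c * u ^ 2 + d * u + k := by
    intro u; nlinarith [sq_nonneg (2 * c * u + d)]
  have hfe : f = fun u => Real.sqrt (c * u ^ 2 + d * u + k) := funext hf
  have hAe : A = fun u => Real.arctan ((2 * c / Real.sqrt (4 * c * k - d ^ 2)) * (u + d / (2 * c))) := funext hA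
  have hs : 0 < Real.sqrt (4 * c * k - d ^ 2) := Real.sqrt_pos.2 hΔ'
  have hs2 : Real.sqrt (4 * c * k - d ^ 2) ^ 2 = 4 * c * k - d ^ 2 := Real.sq_sqrt hΔ'.le
  have hr : 0 < Real.sqrt c := Real.sqrt_pos.2 hc
  have hr2 : Real.sqrt c ^ 2 = c := Real.sq_sqrt hc.le
  have hfd : ∀ u : ℝ, HasDerivAt f
      ((2 * c * u + d) / (2 * Real.sqrt (c * u ^ 2 + d * u + k))) u := by
    intro u
    rw [hfe]
    have h1 : HasDerivAt (fun u : ℝ => c * u ^ 2 + d * u + k) (2 * c * u + d) u := by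
      have := (((hasDerivAt_pow 2 u).const_mul c).add ((hasDerivAt_id u).const_mul d)).add_const k
      exact this.congr_deriv (by rw [show (2:ℕ) - 1 = 1 from rfl]; push_cast; ring)
    exact h1.sqrt (ne_of_gt (hqpos u))
  have hAd : ∀ u : ℝ, HasDerivAt A
      (1 / (1 + ((2 * c / Real.sqrt (4 * c * k - d ^ 2)) * (u + d / (2 * c))) ^ 2) *
        (2 * c / Real.sqrt (4 * c * k - d ^ 2))) u := by
    intro u
    rw [hAe]
    have h1 : HasDerivAt (fun u : ℝ => (2 * c / Real.sqrt (4 * c * k - d ^ 2)) * (u + d / (2 * c)))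
        (2 * c / Real.sqrt (4 * c * k - d ^ 2)) u := by
      simpa using ((hasDerivAt_id u).add_const (d / (2 * c))).const_mul (2 * c / Real.sqrt (4 * c * k - d ^ 2))
    exact h1.arctan
  have key : ∀ u : ℝ, f u * Real.sin (A u) = (2 * c * u + d) / (2 * Real.sqrt c) := by
    intro u
    have hq := hqpos u
    have ht : 0 < Real.sqrt (c * u ^ 2 + d * u + k) := Real.sqrt_pos.2 hq
    have ht2 : Real.sqrt (c * u ^ 2 + d * u + k) ^ 2 = c * u ^ 2 + d * u + k := Real.sq_sqrt hq.le
    rw [hf, hA, Real.sin_arctan]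
    set w : ℝ := (2 * c / Real.sqrt (4 * c * k - d ^ 2)) * (u + d / (2 * c)) with hw
    have hw' : w = (2 * c * u + d) / Real.sqrt (4 * c * k - d ^ 2) := by
      rw [hw]; field_simp
    have h1w : 1 + w ^ 2 = (2 * Real.sqrt c * Real.sqrt (c * u ^ 2 + d * u + k) /
        Real.sqrt (4 * c * k - d ^ 2)) ^ 2 := by
      rw [hw', div_pow, div_pow, mul_pow, mul_pow, hs2, hr2, ht2]
      rw [eq_div_iff hΔ'.ne', add_mul, div_mul_cancel₀ _ hΔ'.ne']
      ring
    have hsq : Real.sqrt (1 + w ^ 2) = 2 * Real.sqrt c * Real.sqrt (c * u ^ 2 + d * u + k) /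
        Real.sqrt (4 * c * k - d ^ 2) := by
      rw [h1w]; exact Real.sqrt_sq (by positivity)
    rw [hsq, hw', div_div_div_cancel_right₀ hs.ne']
    field_simp
    exact mul_div_cancel_left₀ _ (Real.sqrt_pos.2 (by nlinarith [hq])).ne'
  have hg : (fun u => f u * Real.sin (A u)) = fun u => (2 * c * u + d) / (2 * Real.sqrt c) :=
    funext key
  have hFc : ∀ u : ℝ, F u = 2 * c / (2 * Real.sqrt c) := by
    intro u
    have hprod : HasDerivAt (fun u => f u * Real.sin (A u))
        ((2 * c * u + d) / (2 * Real.sqrt (c * u ^ 2 + d * u + k)) * Real.sin (A u) +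
          f u * (Real.cos (A u) *
            (1 / (1 + ((2 * c / Real.sqrt (4 * c * k - d ^ 2)) * (u + d / (2 * c))) ^ 2) *
              (2 * c / Real.sqrt (4 * c * k - d ^ 2))))) u :=
      (hfd u).mul ((hAd u).sin)
    have hlin : HasDerivAt (fun u : ℝ => (2 * c * u + d) / (2 * Real.sqrt c))
        (2 * c / (2 * Real.sqrt c)) u := by
      have := (((hasDerivAt_id u).const_mul (2 * c)).add_const d).div_const (2 * Real.sqrt c)
      exact this.congr_deriv (by ring)
    rw [hg] at hprod
    have huniq := hprod.unique hlin
    rw [hF, (hfd u).deriv, (hAd u).deriv]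
    rw [← huniq]; ring
  constructor
  · intro u
    have : F = fun _ => 2 * c / (2 * Real.sqrt c) := funext hFc
    rw [this]; simp
  · intro u v; rw [hFc u, hFc v]
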